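/- arXiv:1709.06962 — 4 statements merged into one kernel-verified Lean document; each statement's English description precedes it below -/
import Mathlib

section
/- Let n ≥ 1 and k ≥ 0. The operator norm of Jq^k on (ℚ₂[ξ₁,…,ξₙ], ‖·‖₂) equals 1: for every f ∈ ℚ₂[ξ₁,…,ξₙ] one has ‖Jq^k(f)‖₂ ≤ ‖f‖₂, and there exists a nonzero f with ‖Jq^k(f)‖₂ = ‖f‖₂ (indeed Jq^k(ξ₁^k) = ξ₁^{2k}). -/
open MvPolynomial

/-- Total dyadic Steenrod square with a formal variable `t` recording the degree shift:
`ξᵢ ↦ ξᵢ + ξᵢ²·t`.  For a homogeneous `f` of degree `d`, the coefficient of `t^k`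
is exactly the homogeneous component of degree `d + k` of the image of `f` under the
algebra endomorphism `ξᵢ ↦ ξᵢ + ξᵢ²`. -/
noncomputable def JqT (R : Type) [CommRing R] (n : ℕ) :
    MvPolynomial (Fin n) R →ₐ[R] Polynomial (MvPolynomial (Fin n) R) :=
  aeval fun i : Fin n => Polynomial.C (X i) + Polynomial.C (X i ^ 2) * Polynomial.X

/-- The `k`-th (dyadic, for `R = ℤ_[2]`) Steenrod square `Jq^k`, as an `R`-linear
endomorphism of `R[ξ₁,…,ξₙ]`: it sends a homogeneous polynomial of degree `d` to the
homogeneous component of degree `d + k` of its image under the algebra endomorphism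
`ξᵢ ↦ ξᵢ + ξᵢ²`. -/
noncomputable def Jq (R : Type) [CommRing R] (n : ℕ) (k : ℕ) :
    MvPolynomial (Fin n) R →ₗ[R] MvPolynomial (Fin n) R :=
  (LinearMap.restrictScalars R (Polynomial.lcoeff (MvPolynomial (Fin n) R) k)).comp
    (JqT R n).toLinearMap

/-- The Gauss norm of a polynomial over `ℚ₂`: the maximum of the `2`-adic absolute
values of its coefficients. -/
noncomputable def gaussNorm {n : ℕ} (f : MvPolynomial (Fin n) ℚ_[2]) : NNReal :=
  f.support.sup fun J => ‖coeff J f‖₊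

-- aux 1: coeff k of (C a + C b * X)^k = b^k
lemma coeff_pow_self {R : Type} [CommRing R] (a b : R) (k : ℕ) :
    ((Polynomial.C a + Polynomial.C b * Polynomial.X) ^ k).coeff k = b ^ k := by
  induction k with
  | zero => simp
  | succ k ih =>
    have hdeg : ((Polynomial.C a + Polynomial.C b * Polynomial.X) ^ k).natDegree ≤ k := by
      refine (Polynomial.natDegree_pow_le).trans ?_
      have : (Polynomial.C a + Polynomial.C b * Polynomial.X).natDegree ≤ 1 := by
        refine (Polynomial.natDegree_add_le _ _).trans ?_
        simp only [Polynomial.natDegree_C, max_eq_right (Nat.zero_le _)]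
        refine (Polynomial.natDegree_mul_le).trans ?_
        simp [Polynomial.natDegree_X_le]
      calc k * (Polynomial.C a + Polynomial.C b * Polynomial.X).natDegree ≤ k * 1 :=
            Nat.mul_le_mul_left _ this
        _ = k := by ring
    rw [pow_succ, mul_comm, add_mul, Polynomial.coeff_add]
    rw [mul_comm (Polynomial.C b * Polynomial.X), ← mul_assoc]
    rw [Polynomial.coeff_C_mul, Polynomial.coeff_mul_X, Polynomial.coeff_mul_C]
    rw [ih, Polynomial.coeff_eq_zero_of_natDegree_lt (lt_of_le_of_lt hdeg (Nat.lt_succ_self k))]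
    ring

-- Part 3 computation
lemma jq_X_pow (n : ℕ) (i : Fin n) (k : ℕ) :
    Jq ℚ_[2] n k (X i ^ k) = X i ^ (2 * k) := by
  have h1 : JqT ℚ_[2] n (X i ^ k)
      = (Polynomial.C (X i) + Polynomial.C (X i ^ 2) * Polynomial.X) ^ k := by
    rw [map_pow]; congr 1; simp [JqT]
  show Polynomial.coeff (JqT ℚ_[2] n (X i ^ k)) k = _
  rw [h1, coeff_pow_self, ← pow_mul]

lemma JqT_map (n : ℕ) (g : MvPolynomial (Fin n) ℤ) :
    JqT ℚ_[2] n (MvPolynomial.map (Int.castRingHom ℚ_[2]) g)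
      = Polynomial.map (MvPolynomial.map (Int.castRingHom ℚ_[2])) (JqT ℤ n g) := by
  have h : ((JqT ℚ_[2] n).toRingHom.comp (MvPolynomial.map (Int.castRingHom ℚ_[2])))
      = (Polynomial.mapRingHom (MvPolynomial.map (Int.castRingHom ℚ_[2]))).comp
        (JqT ℤ n).toRingHom := by
    apply MvPolynomial.ringHom_ext <;> intro x <;>
      simp [JqT, Polynomial.map_add, Polynomial.map_mul]
  exact RingHom.congr_fun h g

lemma coeff_Jq_monomial_int (n k : ℕ) (M J : Fin n →₀ ℕ) :
    ∃ z : ℤ, coeff J (Jq ℚ_[2] n k (monomial M (1 : ℚ_[2]))) = (z : ℚ_[2]) := by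
  refine ⟨coeff J (Polynomial.coeff (JqT ℤ n (monomial M 1)) k), ?_⟩
  have h0 : MvPolynomial.map (Int.castRingHom ℚ_[2]) (monomial M (1 : ℤ))
      = monomial M (1 : ℚ_[2]) := by simp
  show coeff J (Polynomial.coeff (JqT ℚ_[2] n (monomial M 1)) k) = _
  rw [← h0, JqT_map, Polynomial.coeff_map, MvPolynomial.coeff_map]
  simp

lemma jq_bound (n k : ℕ) (f : MvPolynomial (Fin n) ℚ_[2]) :
    gaussNorm (Jq ℚ_[2] n k f) ≤ gaussNorm f := by
  apply Finset.sup_le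
  intro J _
  have hf : Jq ℚ_[2] n k f
      = ∑ M ∈ f.support, coeff M f • Jq ℚ_[2] n k (monomial M 1) := by
    conv_lhs => rw [f.as_sum, map_sum]
    refine Finset.sum_congr rfl fun M _ => ?_
    rw [← map_smul]
    congr 1
    rw [MvPolynomial.smul_monomial, smul_eq_mul, mul_one]
  rw [hf, MvPolynomial.coeff_sum]
  refine IsUltrametricDist.nnnorm_sum_le_of_forall_le fun M hM => ?_
  obtain ⟨z, hz⟩ := coeff_Jq_monomial_int n k M J
  rw [MvPolynomial.coeff_smul, smul_eq_mul, nnnorm_mul]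
  calc ‖coeff M f‖₊ * ‖coeff J (Jq ℚ_[2] n k (monomial M 1))‖₊
      ≤ gaussNorm f * 1 := by
        refine mul_le_mul' (Finset.le_sup (f := fun J => ‖coeff J f‖₊) hM) ?_
        rw [hz, ← NNReal.coe_le_coe]
        exact_mod_cast Padic.norm_int_le_one z
    _ = gaussNorm f := mul_one _

lemma gaussNorm_X_pow (n : ℕ) (i : Fin n) (m : ℕ) :
    gaussNorm (X i ^ m : MvPolynomial (Fin n) ℚ_[2]) = 1 := by
  rw [X_pow_eq_monomial]
  unfold gaussNorm
  classical
  rw [support_monomial]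
  simp [coeff_monomial]


/-- The operator norm of `Jq^k` on `(ℚ₂[ξ₁,…,ξₙ], ‖·‖₂)` equals `1`: it is bounded
by `1`, and the bound is attained at a nonzero polynomial (indeed
`Jq^k(ξ₁^k) = ξ₁^{2k}`). -/
theorem jq_operator_norm_one (n : ℕ) (hn : 1 ≤ n) (k : ℕ) :
    (∀ f : MvPolynomial (Fin n) ℚ_[2], gaussNorm (Jq ℚ_[2] n k f) ≤ gaussNorm f) ∧
    (∃ f : MvPolynomial (Fin n) ℚ_[2], f ≠ 0 ∧ gaussNorm (Jq ℚ_[2] n k f) = gaussNorm f) ∧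
    Jq ℚ_[2] n k (X (⟨0, hn⟩ : Fin n) ^ k) = X (⟨0, hn⟩ : Fin n) ^ (2 * k) := by
  refine ⟨jq_bound n k, ?_, jq_X_pow n _ k⟩
  refine ⟨X (⟨0, hn⟩ : Fin n) ^ k, pow_ne_zero _ (X_ne_zero _), ?_⟩
  rw [jq_X_pow n _ k, gaussNorm_X_pow, gaussNorm_X_pow]
end

section
/- Let n ≥ 1. As operators on ℤ₂[ξ₁,…,ξₙ], the dyadic Adem expansion A₃ holds: for every f ∈ ℤ₂[ξ₁,…,ξₙ], 3·Jq³(f) − 6·Jq²(Jq¹(f)) + 3·Jq¹(Jq²(f)) + Jq¹(Jq¹(Jq¹(f))) = 0. -/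
open MvPolynomial

section AdemAux

variable {R : Type} [CommRing R] {n : ℕ}

theorem jq_apply (k : ℕ) (f : MvPolynomial (Fin n) R) :
    Jq R n k f = ((JqT R n) f).coeff k := rfl

theorem jqT_X (i : Fin n) :
    JqT R n (X i) = Polynomial.C (X i) + Polynomial.C (X i ^ 2) * Polynomial.X := by
  simp [JqT]

theorem jqT_C (a : R) : JqT R n (C a) = Polynomial.C (C a) := by
  have : (C a : MvPolynomial (Fin n) R) = algebraMap R _ a := rfl
  rw [this, AlgHom.commutes]
  rfl

theorem jqT_coeff_zero (f : MvPolynomial (Fin n) R) : ((JqT R n) f).coeff 0 = f := by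
  induction f using MvPolynomial.induction_on with
  | C a => rw [jqT_C, Polynomial.coeff_C]; simp
  | add p q hp hq => rw [map_add, Polynomial.coeff_add, hp, hq]
  | mul_X p i hp =>
      rw [map_mul, Polynomial.mul_coeff_zero, hp, jqT_X]
      simp

theorem jq_C (k : ℕ) (hk : k ≠ 0) (a : R) : Jq R n k (C a) = 0 := by
  rw [jq_apply, jqT_C, Polynomial.coeff_C, if_neg hk]

theorem jq1_X (i : Fin n) : Jq R n 1 (X i) = X i ^ 2 := by
  rw [jq_apply, jqT_X, Polynomial.coeff_add, Polynomial.coeff_C_mul, Polynomial.coeff_X_one,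
    Polynomial.coeff_C]
  simp

theorem jq2_X (i : Fin n) : Jq R n 2 (X i) = 0 := by
  rw [jq_apply, jqT_X, Polynomial.coeff_add, Polynomial.coeff_C_mul, Polynomial.coeff_X,
    Polynomial.coeff_C]
  norm_num

theorem jq3_X (i : Fin n) : Jq R n 3 (X i) = 0 := by
  rw [jq_apply, jqT_X, Polynomial.coeff_add, Polynomial.coeff_C_mul, Polynomial.coeff_X,
    Polynomial.coeff_C]
  norm_num

theorem jq1_mul (f g : MvPolynomial (Fin n) R) :
    Jq R n 1 (f * g) = Jq R n 1 f * g + f * Jq R n 1 g := by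
  simp only [jq_apply, map_mul, Polynomial.coeff_mul,
    Finset.Nat.sum_antidiagonal_eq_sum_range_succ_mk, Finset.sum_range_succ,
    Finset.sum_range_zero, Nat.sub_self, Nat.sub_zero, jqT_coeff_zero]
  ring

theorem jq2_mul (f g : MvPolynomial (Fin n) R) :
    Jq R n 2 (f * g) = Jq R n 2 f * g + Jq R n 1 f * Jq R n 1 g + f * Jq R n 2 g := by
  simp only [jq_apply, map_mul, Polynomial.coeff_mul,
    Finset.Nat.sum_antidiagonal_eq_sum_range_succ_mk, Finset.sum_range_succ,
    Finset.sum_range_zero, Nat.sub_self, Nat.sub_zero, jqT_coeff_zero]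
  norm_num
  ring

theorem jq3_mul (f g : MvPolynomial (Fin n) R) :
    Jq R n 3 (f * g) = Jq R n 3 f * g + Jq R n 2 f * Jq R n 1 g
      + Jq R n 1 f * Jq R n 2 g + f * Jq R n 3 g := by
  simp only [jq_apply, map_mul, Polynomial.coeff_mul,
    Finset.Nat.sum_antidiagonal_eq_sum_range_succ_mk, Finset.sum_range_succ,
    Finset.sum_range_zero, Nat.sub_self, Nat.sub_zero, jqT_coeff_zero]
  norm_num
  ring

/-- The derivation `E = Σ ξᵢ³ ∂ᵢ`. -/
noncomputable def Ederiv (R : Type) [CommRing R] (n : ℕ) :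
    Derivation R (MvPolynomial (Fin n) R) (MvPolynomial (Fin n) R) :=
  mkDerivation R fun i : Fin n => X i ^ 3

/-- The derivation `F = Σ ξᵢ⁴ ∂ᵢ`. -/
noncomputable def Fderiv (R : Type) [CommRing R] (n : ℕ) :
    Derivation R (MvPolynomial (Fin n) R) (MvPolynomial (Fin n) R) :=
  mkDerivation R fun i : Fin n => X i ^ 4

theorem Ederiv_X (i : Fin n) : Ederiv R n (X i) = X i ^ 3 := mkDerivation_X R _ i
theorem Fderiv_X (i : Fin n) : Fderiv R n (X i) = X i ^ 4 := mkDerivation_X R _ i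

theorem Ederiv_mul (f g : MvPolynomial (Fin n) R) :
    Ederiv R n (f * g) = Ederiv R n f * g + f * Ederiv R n g := by
  rw [Derivation.leibniz, smul_eq_mul, smul_eq_mul]; ring

theorem Fderiv_mul (f g : MvPolynomial (Fin n) R) :
    Fderiv R n (f * g) = Fderiv R n f * g + f * Fderiv R n g := by
  rw [Derivation.leibniz, smul_eq_mul, smul_eq_mul]; ring

theorem jq1_X_sq (i : Fin n) : Jq R n 1 (X i ^ 2) = (2 : R) • (X i ^ 3) := by
  rw [sq, jq1_mul, jq1_X, smul_eq_C_mul]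
  simp only [map_ofNat]
  ring

theorem jq1_X_cube (i : Fin n) : Jq R n 1 (X i ^ 3) = (3 : R) • (X i ^ 4) := by
  rw [pow_succ, jq1_mul, jq1_X, jq1_X_sq, smul_eq_C_mul, smul_eq_C_mul]
  simp only [map_ofNat]
  ring

theorem Ederiv_X_sq (i : Fin n) : Ederiv R n (X i ^ 2) = (2 : R) • (X i ^ 4) := by
  rw [sq, Ederiv_mul, Ederiv_X, smul_eq_C_mul]
  simp only [map_ofNat]
  ring

/-- `2·Jq² = Jq¹∘Jq¹ − 2·E`. -/
theorem two_jq2 (f : MvPolynomial (Fin n) R) :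
    (2 : R) • Jq R n 2 f = Jq R n 1 (Jq R n 1 f) - (2 : R) • Ederiv R n f := by
  induction f using MvPolynomial.induction_on with
  | C a => simp [jq_C]
  | add p q hp hq =>
      simp only [map_add, smul_add] at hp hq ⊢
      linear_combination hp + hq
  | mul_X p i hp =>
      simp only [jq2_mul, jq1_mul, map_add, map_smul, Derivation.map_smul,
        Ederiv_mul, jq1_X, jq2_X, Ederiv_X, jq1_X_sq, jq1_X_cube, Ederiv_X_sq]
      simp only [smul_eq_C_mul, map_ofNat] at hp ⊢
      linear_combination (X i : MvPolynomial (Fin n) R) * hp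

/-- `[Jq¹, E] = F`. -/
theorem jq1_Ederiv_comm (f : MvPolynomial (Fin n) R) :
    Jq R n 1 (Ederiv R n f) - Ederiv R n (Jq R n 1 f) = Fderiv R n f := by
  induction f using MvPolynomial.induction_on with
  | C a => simp [jq_C]
  | add p q hp hq =>
      simp only [map_add] at hp hq ⊢
      linear_combination hp + hq
  | mul_X p i hp =>
      simp only [jq1_mul, map_add, map_smul, Derivation.map_smul,
        Ederiv_mul, Fderiv_mul, jq1_X, Ederiv_X, Fderiv_X, jq1_X_sq, jq1_X_cube, Ederiv_X_sq]
      simp only [smul_eq_C_mul, map_ofNat] at hp ⊢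
      linear_combination (X i : MvPolynomial (Fin n) R) * hp

/-- `6·Jq³ = Jq¹∘Jq¹∘Jq¹ − 6·E∘Jq¹ + 6·F`. -/
theorem six_jq3 (f : MvPolynomial (Fin n) R) :
    (6 : R) • Jq R n 3 f
      = Jq R n 1 (Jq R n 1 (Jq R n 1 f)) - (6 : R) • Ederiv R n (Jq R n 1 f)
        + (6 : R) • Fderiv R n f := by
  induction f using MvPolynomial.induction_on with
  | C a => simp [jq_C]
  | add p q hp hq =>
      simp only [map_add, smul_add] at hp hq ⊢
      linear_combination hp + hq
  | mul_X p i hp =>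
      have h2 := two_jq2 p
      simp only [jq3_mul, jq2_mul, jq1_mul, map_add, map_smul, Derivation.map_smul,
        Ederiv_mul, Fderiv_mul, jq1_X, jq2_X, jq3_X, Ederiv_X, Fderiv_X,
        jq1_X_sq, jq1_X_cube, Ederiv_X_sq]
      simp only [smul_eq_C_mul, map_ofNat] at hp h2 ⊢
      linear_combination (X i : MvPolynomial (Fin n) R) * hp
        + ((3 : MvPolynomial (Fin n) R) * X i ^ 2) * h2

end AdemAux

/-- The dyadic Adem expansion `A₃ = 3·Jq³ − 6·Jq²Jq¹ + 3·Jq¹Jq² + Jq¹Jq¹Jq¹ = 0`. -/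
theorem adem_expansion_A3 (n : ℕ) (hn : 1 ≤ n) (f : MvPolynomial (Fin n) ℤ_[2]) :
    (3 : ℤ_[2]) • Jq ℤ_[2] n 3 f - (6 : ℤ_[2]) • Jq ℤ_[2] n 2 (Jq ℤ_[2] n 1 f)
      + (3 : ℤ_[2]) • Jq ℤ_[2] n 1 (Jq ℤ_[2] n 2 f)
      + Jq ℤ_[2] n 1 (Jq ℤ_[2] n 1 (Jq ℤ_[2] n 1 f)) = 0 := by
  have h2 := six_jq3 f
  have h1a := two_jq2 (Jq ℤ_[2] n 1 f)
  have h1b := congrArg (Jq ℤ_[2] n 1) (two_jq2 f)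
  rw [map_smul, map_sub, map_smul] at h1b
  have h3 := jq1_Ederiv_comm f
  have key : (2 : MvPolynomial (Fin n) ℤ_[2]) *
      ((3 : ℤ_[2]) • Jq ℤ_[2] n 3 f - (6 : ℤ_[2]) • Jq ℤ_[2] n 2 (Jq ℤ_[2] n 1 f)
        + (3 : ℤ_[2]) • Jq ℤ_[2] n 1 (Jq ℤ_[2] n 2 f)
        + Jq ℤ_[2] n 1 (Jq ℤ_[2] n 1 (Jq ℤ_[2] n 1 f))) = 0 := by
    simp only [smul_eq_C_mul, map_ofNat] at h2 h1a h1b h3 ⊢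
    linear_combination h2 - (6 : MvPolynomial (Fin n) ℤ_[2]) * h1a
      + (3 : MvPolynomial (Fin n) ℤ_[2]) * h1b - (6 : MvPolynomial (Fin n) ℤ_[2]) * h3
  have h20 : (2 : MvPolynomial (Fin n) ℤ_[2]) ≠ 0 := two_ne_zero
  rcases mul_eq_zero.mp key with h | h
  · exact absurd h h20
  · exact h
end

section
/- Let n ≥ 1. For every k ≥ 0, the operator Jq^k, regarded as a ℚ₂-linear endomorphism of ℚ₂[ξ₁,…,ξₙ], belongs to the ℚ₂-subalgebra of the algebra of ℚ₂-linear endomorphisms of ℚ₂[ξ₁,…,ξₙ] generated by Jq¹ and Jq². -/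
open MvPolynomial

namespace JqAux

variable {n : ℕ}

/-- `W n m` is the derivation `D_{m+1}` with `X i ↦ X i ^ (m+2)`. -/
noncomputable def W (n m : ℕ) :
    Derivation ℚ_[2] (MvPolynomial (Fin n) ℚ_[2]) (MvPolynomial (Fin n) ℚ_[2]) :=
  MvPolynomial.mkDerivation _ fun i => X i ^ (m + 2)

lemma W_X (m : ℕ) (i : Fin n) : W n m (X i) = X i ^ (m + 2) :=
  mkDerivation_X _ _ _

lemma Jq_apply (k : ℕ) (f : MvPolynomial (Fin n) ℚ_[2]) :
    Jq ℚ_[2] n k f = (JqT ℚ_[2] n f).coeff k := rfl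

lemma JqT_X (i : Fin n) :
    JqT ℚ_[2] n (X i) = Polynomial.C (X i) + Polynomial.C (X i ^ 2) * Polynomial.X :=
  aeval_X _ i

lemma Jq_zero (f : MvPolynomial (Fin n) ℚ_[2]) : Jq ℚ_[2] n 0 f = f := by
  have h : (((Polynomial.aeval (0 : MvPolynomial (Fin n) ℚ_[2])).restrictScalars
      ℚ_[2]).comp (JqT ℚ_[2] n)) = AlgHom.id _ _ := by
    apply MvPolynomial.algHom_ext
    intro i
    simp [JqT]
  have h2 := congrArg (fun g => g f) (congrArg DFunLike.coe h)
  simp only [AlgHom.coe_comp, AlgHom.coe_restrictScalars, Function.comp_apply,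
    AlgHom.coe_id, id_eq] at h2
  rw [Jq_apply, Polynomial.coeff_zero_eq_eval_zero, ← Polynomial.coe_aeval_eq_eval]
  exact h2

lemma Jq_C (k : ℕ) (a : ℚ_[2]) :
    Jq ℚ_[2] n k (C a) = if k = 0 then C a else 0 := by
  rw [Jq_apply]
  have : JqT ℚ_[2] n (C a) = Polynomial.C (C a) := by
    simp [JqT, aeval_C, Polynomial.algebraMap_apply, MvPolynomial.algebraMap_eq]
  rw [this, Polynomial.coeff_C]

lemma JqT_mul_X (p : MvPolynomial (Fin n) ℚ_[2]) (i : Fin n) :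
    JqT ℚ_[2] n (p * X i) = JqT ℚ_[2] n p * Polynomial.C (X i)
      + (JqT ℚ_[2] n p * Polynomial.C (X i ^ 2)) * Polynomial.X := by
  rw [map_mul, JqT_X]; ring

lemma Jq_succ_mul_X (k : ℕ) (p : MvPolynomial (Fin n) ℚ_[2]) (i : Fin n) :
    Jq ℚ_[2] n (k + 1) (p * X i)
      = Jq ℚ_[2] n (k + 1) p * X i + Jq ℚ_[2] n k p * X i ^ 2 := by
  rw [Jq_apply, JqT_mul_X, Polynomial.coeff_add, Polynomial.coeff_mul_C,
    Polynomial.coeff_mul_X, Polynomial.coeff_mul_C, Jq_apply, Jq_apply]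

lemma Jq_zero_mul_X (p : MvPolynomial (Fin n) ℚ_[2]) (i : Fin n) :
    Jq ℚ_[2] n 0 (p * X i) = Jq ℚ_[2] n 0 p * X i := by
  simp [Jq_apply, JqT_mul_X, Polynomial.coeff_mul_C]

lemma W_C (m : ℕ) (a : ℚ_[2]) : W n m (C a) = 0 := by
  have : (C a : MvPolynomial (Fin n) ℚ_[2]) = algebraMap ℚ_[2] _ a := rfl
  rw [this, Derivation.map_algebraMap]

lemma W_X2 (m : ℕ) (i : Fin n) :
    W n m ((X i : MvPolynomial (Fin n) ℚ_[2]) ^ 2) = 2 * X i ^ (m + 3) := by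
  rw [pow_two, Derivation.leibniz, W_X]; simp only [smul_eq_mul]; ring

lemma main (f : MvPolynomial (Fin n) ℚ_[2]) (k : ℕ) :
    ((k : ℚ_[2]) + 1) • Jq ℚ_[2] n (k + 1) f
      = ∑ m ∈ Finset.range (k + 1),
          (-2 : ℚ_[2]) ^ m • W n m (Jq ℚ_[2] n (k - m) f) := by
  induction f using MvPolynomial.induction_on generalizing k with
  | C a =>
      rw [Jq_C, if_neg (Nat.succ_ne_zero k), smul_zero]
      refine (Finset.sum_eq_zero ?_).symm
      intro m hm
      rw [Jq_C]
      by_cases h : k - m = 0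
      · rw [if_pos h, W_C, smul_zero]
      · rw [if_neg h, map_zero, smul_zero]
  | add p q hp hq =>
      simp only [map_add, smul_add, hp, hq, ← Finset.sum_add_distrib]
  | mul_X p i hp =>
      cases k with
      | zero =>
          have h0 := hp 0
          simp only [Nat.cast_zero, zero_add, one_smul, Finset.range_one,
            Finset.sum_singleton, pow_zero, Nat.sub_zero, Jq_zero] at h0 ⊢
          have h1 := Jq_succ_mul_X 0 p i
          norm_num at h1
          rw [h1, Jq_zero, Derivation.leibniz, W_X, h0, smul_eq_mul, smul_eq_mul]
          ring
      | succ k =>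
          have IH1 := hp (k + 1)
          have IH0 := hp k
          have hterm : ∀ m ∈ Finset.range (k + 1),
              (-2 : ℚ_[2]) ^ m • W n m (Jq ℚ_[2] n (k + 1 - m) (p * X i))
              = X i * ((-2 : ℚ_[2]) ^ m • W n m (Jq ℚ_[2] n (k + 1 - m) p))
                + X i ^ 2 * ((-2 : ℚ_[2]) ^ m • W n m (Jq ℚ_[2] n (k - m) p))
                + (((-2 : ℚ_[2]) ^ m • (Jq ℚ_[2] n (k + 1 - m) p * X i ^ (m + 2)))
                   - ((-2 : ℚ_[2]) ^ (m + 1) • (Jq ℚ_[2] n (k + 1 - (m + 1)) p * X i ^ (m + 1 + 2)))) := by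
            intro m hm
            have hs : k + 1 - m = (k - m) + 1 := by
              have := Finset.mem_range.mp hm; omega
            have hs2 : k + 1 - (m + 1) = k - m := by omega
            rw [hs, hs2, Jq_succ_mul_X, map_add, Derivation.leibniz, Derivation.leibniz,
              W_X, W_X2]
            simp only [smul_eq_mul, MvPolynomial.smul_eq_C_mul, map_mul, map_pow, map_neg,
              map_ofNat]
            ring
          rw [Finset.sum_range_succ, Finset.sum_congr rfl hterm,
            Finset.sum_add_distrib, Finset.sum_add_distrib, ← Finset.mul_sum, ← Finset.mul_sum,
            Finset.sum_range_sub' (fun m => (-2 : ℚ_[2]) ^ m • (Jq ℚ_[2] n (k + 1 - m) p * X i ^ (m + 2)))]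
          -- tail term
          have htail : (-2 : ℚ_[2]) ^ (k + 1) • W n (k + 1) (Jq ℚ_[2] n (k + 1 - (k + 1)) (p * X i))
              = X i * ((-2 : ℚ_[2]) ^ (k + 1) • W n (k + 1) (Jq ℚ_[2] n (k + 1 - (k + 1)) p))
                + (-2 : ℚ_[2]) ^ (k + 1) • (Jq ℚ_[2] n (k + 1 - (k + 1)) p * X i ^ (k + 1 + 2)) := by
            rw [Nat.sub_self, Jq_zero, Jq_zero, Derivation.leibniz, W_X]
            simp only [smul_eq_mul, MvPolynomial.smul_eq_C_mul]
            ring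
          rw [htail]
          have hS1 := Finset.sum_range_succ
            (fun m => (-2 : ℚ_[2]) ^ m • W n m (Jq ℚ_[2] n (k + 1 - m) p)) (k + 1)
          have hS1' : ∑ m ∈ Finset.range (k + 1),
              (-2 : ℚ_[2]) ^ m • W n m (Jq ℚ_[2] n (k + 1 - m) p)
              = (((k + 1 : ℕ) : ℚ_[2]) + 1) • Jq ℚ_[2] n (k + 1 + 1) p
                - (-2 : ℚ_[2]) ^ (k + 1) • W n (k + 1) (Jq ℚ_[2] n (k + 1 - (k + 1)) p) := by
            rw [IH1, hS1]; abel
          rw [hS1', Jq_succ_mul_X, ← IH0]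
          simp only [Nat.sub_self, Nat.sub_zero, pow_zero, one_smul, Jq_zero]
          push_cast
          simp only [MvPolynomial.smul_eq_C_mul, map_add, map_one, map_natCast]
          ring
lemma main' (k : ℕ) :
    ((k : ℚ_[2]) + 1) • Jq ℚ_[2] n (k + 1)
      = ∑ m ∈ Finset.range (k + 1),
          (-2 : ℚ_[2]) ^ m • ((W n m).toLinearMap ∘ₗ Jq ℚ_[2] n (k - m)) := by
  apply LinearMap.ext
  intro f
  have h := main f k
  simpa [LinearMap.sum_apply, LinearMap.smul_apply, LinearMap.comp_apply] using h

lemma witt (m : ℕ) :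
    ⁅W n 0, W n (m + 1)⁆ = ((m : ℚ_[2]) + 1) • W n (m + 2) := by
  apply derivation_ext
  intro i
  rw [Derivation.commutator_apply, W_X, W_X]
  rw [show m + 1 + 2 = (m + 2) + 1 from rfl, Derivation.leibniz_pow, W_X,
    W_X2]
  rw [Derivation.smul_apply, W_X]
  simp only [smul_eq_mul, nsmul_eq_mul, MvPolynomial.smul_eq_C_mul, map_add, map_one,
    map_natCast]
  push_cast
  ring

end JqAux


open JqAux in
/-- As a `ℚ₂`-algebra of linear endomorphisms, the dyadic Steenrod algebra is generated
by `Jq¹` and `Jq²`: every `Jq^k` lies in the `ℚ₂`-subalgebra of `End(ℚ₂[ξ₁,…,ξₙ])`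
generated by `Jq¹` and `Jq²`. -/
theorem jq_mem_adjoin_jq1_jq2 (n : ℕ) (hn : 1 ≤ n) (k : ℕ) :
    (Jq ℚ_[2] n k : Module.End ℚ_[2] (MvPolynomial (Fin n) ℚ_[2])) ∈
      Algebra.adjoin ℚ_[2]
        ({Jq ℚ_[2] n 1, Jq ℚ_[2] n 2} :
          Set (Module.End ℚ_[2] (MvPolynomial (Fin n) ℚ_[2]))) := by
  set A := Algebra.adjoin ℚ_[2]
      ({Jq ℚ_[2] n 1, Jq ℚ_[2] n 2} :
        Set (Module.End ℚ_[2] (MvPolynomial (Fin n) ℚ_[2]))) with hA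
  have h1 : Jq ℚ_[2] n 1 ∈ A := Algebra.subset_adjoin (Set.mem_insert _ _)
  have h2 : Jq ℚ_[2] n 2 ∈ A := Algebra.subset_adjoin (Set.mem_insert_of_mem _ rfl)
  have hid : Jq ℚ_[2] n 0 = (1 : Module.End ℚ_[2] (MvPolynomial (Fin n) ℚ_[2])) :=
    LinearMap.ext fun f => Jq_zero f
  have h0 : Jq ℚ_[2] n 0 ∈ A := by rw [hid]; exact one_mem A
  -- W 0 = Jq 1
  have hW0 : ((W n 0 : Derivation ℚ_[2] _ _) :
      Module.End ℚ_[2] (MvPolynomial (Fin n) ℚ_[2])) = Jq ℚ_[2] n 1 := by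
    have h := main' (n := n) 0
    simp only [Nat.cast_zero, zero_add, one_smul, Finset.range_one, Finset.sum_singleton,
      pow_zero, Nat.sub_zero, hid] at h
    rw [h, ← Module.End.mul_eq_comp, mul_one]
  -- membership of all W m
  have hWmem : ∀ m, ((W n m : Derivation ℚ_[2] _ _) :
      Module.End ℚ_[2] (MvPolynomial (Fin n) ℚ_[2])) ∈ A := by
    intro m
    induction m using Nat.strong_induction_on with
    | _ m ih =>
      rcases m with _ | (_ | m)
      · rw [hW0]; exact h1
      · -- W 1 from main' 1
        have h := main' (n := n) 1
        rw [Finset.sum_range_succ, Finset.sum_range_one] at h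
        simp only [pow_zero, one_smul, pow_one, Nat.sub_zero, Nat.sub_self, hid, hW0] at h
        -- h : (1+1) • Jq 2 = Jq1 ∘ₗ Jq 1 + (-2) • (↑(W n 1) ∘ₗ 1)
        rw [← Module.End.mul_eq_comp, ← Module.End.mul_eq_comp, mul_one] at h
        have hsolve : ((W n 1 : Derivation ℚ_[2] _ _) :
            Module.End ℚ_[2] (MvPolynomial (Fin n) ℚ_[2]))
            = (-2 : ℚ_[2])⁻¹ • ((((1 : ℕ) : ℚ_[2]) + 1) • Jq ℚ_[2] n (1 + 1)
                - Jq ℚ_[2] n 1 * Jq ℚ_[2] n 1) := by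
          rw [eq_inv_smul_iff₀ (by norm_num : (-2 : ℚ_[2]) ≠ 0)]
          rw [h]
          abel
        rw [hsolve]
        exact A.smul_mem (sub_mem (A.smul_mem h2 _) (mul_mem h1 h1)) _
      · -- W (m+2) via Witt relation
        have hw := witt (n := n) m
        have hlin := congrArg
          (fun D : Derivation ℚ_[2] (MvPolynomial (Fin n) ℚ_[2])
              (MvPolynomial (Fin n) ℚ_[2]) =>
            (D : MvPolynomial (Fin n) ℚ_[2] →ₗ[ℚ_[2]] MvPolynomial (Fin n) ℚ_[2])) hw
        simp only [Derivation.commutator_coe_linear_map, Derivation.coe_smul_linearMap,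
          Ring.lie_def] at hlin
        have hne : ((m : ℚ_[2]) + 1) ≠ 0 := by
          have h' : ((m + 1 : ℕ) : ℚ_[2]) ≠ 0 := Nat.cast_ne_zero.mpr (Nat.succ_ne_zero m)
          push_cast at h'
          exact h'
        have hform : ((W n (m + 2) : Derivation ℚ_[2] _ _) :
            Module.End ℚ_[2] (MvPolynomial (Fin n) ℚ_[2]))
            = ((m : ℚ_[2]) + 1)⁻¹ •
              (((W n 0 : Derivation ℚ_[2] _ _) :
                  Module.End ℚ_[2] (MvPolynomial (Fin n) ℚ_[2])) *
                ((W n (m + 1) : Derivation ℚ_[2] _ _) :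
                  Module.End ℚ_[2] (MvPolynomial (Fin n) ℚ_[2]))
               - ((W n (m + 1) : Derivation ℚ_[2] _ _) :
                  Module.End ℚ_[2] (MvPolynomial (Fin n) ℚ_[2])) *
                ((W n 0 : Derivation ℚ_[2] _ _) :
                  Module.End ℚ_[2] (MvPolynomial (Fin n) ℚ_[2]))) := by
          rw [hlin, inv_smul_smul₀ hne]
        rw [hform]
        exact A.smul_mem (sub_mem (mul_mem (ih 0 (by omega)) (ih (m + 1) (by omega)))
          (mul_mem (ih (m + 1) (by omega)) (ih 0 (by omega)))) _
  -- final strong induction on k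
  induction k using Nat.strong_induction_on with
  | _ k ih =>
    rcases k with _ | (_ | (_ | j))
    · exact h0
    · exact h1
    · exact h2
    · have h := main' (n := n) (j + 2)
      show Jq ℚ_[2] n (j + 2 + 1) ∈ A
      have hcast : ((j + 2 : ℕ) : ℚ_[2]) + 1 ≠ 0 := by
        have h' : ((j + 3 : ℕ) : ℚ_[2]) ≠ 0 := Nat.cast_ne_zero.mpr (by omega)
        push_cast at h' ⊢
        intro hc
        exact h' (by linear_combination hc)
      have hform : Jq ℚ_[2] n (j + 2 + 1)
          = (((j + 2 : ℕ) : ℚ_[2]) + 1)⁻¹ •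
            ∑ m ∈ Finset.range (j + 2 + 1),
              (-2 : ℚ_[2]) ^ m • (((W n m : Derivation ℚ_[2] _ _) :
                Module.End ℚ_[2] (MvPolynomial (Fin n) ℚ_[2])) ∘ₗ Jq ℚ_[2] n (j + 2 - m)) := by
        rw [← h, inv_smul_smul₀ hcast]
      rw [hform]
      refine A.smul_mem (Subalgebra.sum_mem A fun m hm => A.smul_mem ?_ _) _
      rw [← Module.End.mul_eq_comp]
      exact mul_mem (hWmem m) (ih (j + 2 - m) (by omega))
end

section
/- Let n ≥ 1 and let a, b be integers with 0 < a < 2b. Then for every f ∈ ℤ₂[ξ₁,…,ξₙ], the polynomial Jq^a(Jq^b(f)) − Σ_{j=0}^{⌊a/2⌋} C(b−j−1, a−2j) · Jq^{a+b−j}(Jq^j(f)) has all its coefficients in 2ℤ₂ (here C(·,·) are integer binomial coefficients and Jq⁰ = id); i.e., the Adem relation elements R(a,b) map ℤ₂[ξ₁,…,ξₙ] into 2·ℤ₂[ξ₁,…,ξₙ]. -/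
open MvPolynomial

namespace AdemAux

open PowerSeries

variable {R : Type*} [CommRing R]

/-- Mod-2 inverse binomial series: `g m = Σ C(m+s, s) X^s`, i.e. `(1+X)^{-(m+1)}` mod 2. -/
noncomputable def g (R : Type*) [CommRing R] (m : ℕ) : PowerSeries R :=
  PowerSeries.mk fun s => ((m + s).choose s : R)

theorem coeff_one_add_X_pow (c e : ℕ) :
    (PowerSeries.coeff e) ((1 + PowerSeries.X) ^ c) = (c.choose e : R) := by
  have h : ((1 + Polynomial.X : Polynomial R) : PowerSeries R) = 1 + PowerSeries.X := by
    simp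
  rw [← h, ← Polynomial.coe_pow, Polynomial.coeff_coe, Polynomial.coeff_one_add_X_pow]

theorem gstep (h2 : (2 : R) = 0) (m : ℕ) :
    g R (m + 1) * (1 + PowerSeries.X) = g R m := by
  ext e
  rw [mul_add, mul_one, map_add]
  cases e with
  | zero => simp [g]
  | succ d =>
    rw [PowerSeries.coeff_succ_mul_X]
    simp only [g, PowerSeries.coeff_mk]
    have e1 : m + 1 + (d + 1) = (m + d + 1) + 1 := by omega
    have e2 : m + (d + 1) = m + d + 1 := by omega
    have e3 : m + 1 + d = m + d + 1 := by omega
    rw [e1, e2, e3, Nat.choose_succ_succ (m + d + 1) d]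
    push_cast
    linear_combination (((m + d + 1).choose d : R)) * h2

theorem giter (h2 : (2 : R) = 0) (d m : ℕ) :
    g R (m + d) * (1 + PowerSeries.X) ^ d = g R m := by
  induction d with
  | zero => simp
  | succ e ih =>
    have h0 : m + (e + 1) = (m + e) + 1 := by omega
    calc g R (m + (e+1)) * (1 + PowerSeries.X) ^ (e+1)
        = (g R ((m + e) + 1) * (1 + PowerSeries.X)) * (1 + PowerSeries.X) ^ e := by
          rw [h0]; ring
      _ = g R (m + e) * (1 + PowerSeries.X) ^ e := by rw [gstep h2 (m + e)]
      _ = g R m := ih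

theorem gone (h2 : (2 : R) = 0) : g R 0 * (1 + PowerSeries.X) = 1 := by
  ext e
  rw [mul_add, mul_one, map_add]
  cases e with
  | zero => simp [g]
  | succ d =>
    rw [PowerSeries.coeff_succ_mul_X]
    simp only [g, PowerSeries.coeff_mk, Nat.zero_add, Nat.choose_self]
    have hc : (PowerSeries.coeff (d+1)) (1 : PowerSeries R) = 0 := by simp
    rw [hc]
    push_cast
    linear_combination h2

theorem gpow (h2 : (2 : R) = 0) (a d : ℕ) :
    g R a * (1 + PowerSeries.X) ^ (a + 1 + d) = (1 + PowerSeries.X) ^ d := by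
  have h1 : (1 + PowerSeries.X : PowerSeries R) ^ (a + 1 + d)
      = (1 + PowerSeries.X) ^ a * ((1 + PowerSeries.X) * (1 + PowerSeries.X) ^ d) := by
    ring
  rw [h1, ← mul_assoc, ← mul_assoc]
  have h3 : g R a * (1 + PowerSeries.X) ^ a = g R 0 := by
    have := giter h2 a 0
    rwa [Nat.zero_add] at this
  rw [h3, gone h2, one_mul]

theorem central (e : ℕ) (he : 0 < e) (h2 : (2 : R) = 0) : ((2 * e).choose e : R) = 0 := by
  obtain ⟨d, rfl⟩ := Nat.exists_eq_add_of_lt he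
  have key : (2 * (d + 1)).choose (d + 1) = 2 * ((2 * d + 1).choose d) := by
    have h := Nat.add_one_mul_choose_eq (2 * d + 1) d
    have h1 : 2 * d + 1 + 1 = 2 * (d + 1) := by omega
    rw [h1] at h
    have h' : (2 * ((2 * d + 1).choose d)) * (d + 1) = ((2 * (d + 1)).choose (d + 1)) * (d + 1) := by
      calc (2 * ((2 * d + 1).choose d)) * (d + 1) = 2 * (d + 1) * ((2 * d + 1).choose d) := by ring
        _ = _ := h
    exact (Nat.eq_of_mul_eq_mul_right (Nat.succ_pos d) h').symm
  have h0 : 0 + d + 1 = d + 1 := by omega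
  rw [h0, key]
  push_cast
  linear_combination (((2 * d + 1).choose d : R)) * h2

theorem conv (H : PowerSeries R) (a : ℕ) :
    (PowerSeries.coeff a) (H * g R a)
      = ∑ i ∈ Finset.range (a + 1),
          ((2 * a - i).choose (a - i) : R) * (PowerSeries.coeff i) H := by
  rw [PowerSeries.coeff_mul, Finset.Nat.sum_antidiagonal_eq_sum_range_succ_mk]
  refine Finset.sum_congr rfl fun i hi => ?_
  have hia : i ≤ a := by
    have := Finset.mem_range.mp hi; omega
  have harith : a + (a - i) = 2 * a - i := by omega
  simp only [g, PowerSeries.coeff_mk, harith]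
  ring

theorem SL1 (h2 : (2 : R) = 0) (a a' : ℕ) :
    ∑ i ∈ Finset.range (a + 1),
        ((2 * a - i).choose (a - i) : R) * (if a' ≤ i then ((a'.choose (i - a')) : R) else 0)
      = if a' = a then 1 else 0 := by
  have hH : ∀ i, (PowerSeries.coeff i) ((1 + PowerSeries.X) ^ a' * PowerSeries.X ^ a')
      = if a' ≤ i then ((a'.choose (i - a')) : R) else 0 := by
    intro i
    rw [PowerSeries.coeff_mul_X_pow']
    split_ifs with h
    · rw [coeff_one_add_X_pow]
    · rfl
  have key : ∑ i ∈ Finset.range (a + 1),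
      ((2 * a - i).choose (a - i) : R) * (if a' ≤ i then ((a'.choose (i - a')) : R) else 0)
      = (PowerSeries.coeff a) (((1 + PowerSeries.X) ^ a' * PowerSeries.X ^ a') * g R a) := by
    rw [conv]
    exact Finset.sum_congr rfl fun i _ => by rw [hH]
  rw [key]
  by_cases hle : a' ≤ a
  · obtain ⟨e, rfl⟩ : ∃ e, a = e + a' := ⟨a - a', by omega⟩
    have hrw : ((1 + PowerSeries.X) ^ a' * PowerSeries.X ^ a') * g R (e + a')
        = PowerSeries.X ^ a' * g R e := by
      rw [← giter h2 a' e]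
      ring
    rw [hrw, PowerSeries.coeff_X_pow_mul]
    simp only [g, PowerSeries.coeff_mk]
    rcases Nat.eq_zero_or_pos e with he | he
    · subst he
      simp
    · have h1 : e + e = 2 * e := by omega
      rw [h1, central e he h2]
      have : ¬ (a' = e + a') := by omega
      rw [if_neg this]
  · have hrw : ((1 + PowerSeries.X) ^ a' * PowerSeries.X ^ a') * g R a
        = ((1 + PowerSeries.X) ^ a' * g R a) * PowerSeries.X ^ a' := by ring
    rw [hrw, PowerSeries.coeff_mul_X_pow', if_neg hle, if_neg (by omega)]

theorem SL2 (h2 : (2 : R) = 0) (a j d : ℕ) (hj : 2 * j ≤ a) :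
    ∑ i ∈ Finset.range (a + 1),
        ((2 * a - i).choose (a - i) : R)
          * (if 2 * j ≤ i then (((a + 1 + d).choose (i - 2 * j)) : R) else 0)
      = (d.choose (a - 2 * j) : R) := by
  have hH : ∀ i, (PowerSeries.coeff i)
      ((1 + PowerSeries.X) ^ (a + 1 + d) * PowerSeries.X ^ (2 * j))
      = if 2 * j ≤ i then (((a + 1 + d).choose (i - 2 * j)) : R) else 0 := by
    intro i
    rw [PowerSeries.coeff_mul_X_pow']
    split_ifs with h
    · rw [coeff_one_add_X_pow]
    · rfl
  have key : ∑ i ∈ Finset.range (a + 1),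
      ((2 * a - i).choose (a - i) : R)
        * (if 2 * j ≤ i then (((a + 1 + d).choose (i - 2 * j)) : R) else 0)
      = (PowerSeries.coeff a)
          (((1 + PowerSeries.X) ^ (a + 1 + d) * PowerSeries.X ^ (2 * j)) * g R a) := by
    rw [conv]
    exact Finset.sum_congr rfl fun i _ => by rw [hH]
  rw [key]
  have hrw : ((1 + PowerSeries.X) ^ (a + 1 + d) * PowerSeries.X ^ (2 * j)) * g R a
      = ((1 + PowerSeries.X) ^ d) * PowerSeries.X ^ (2 * j) := by
    have := gpow h2 a d
    calc ((1 + PowerSeries.X) ^ (a + 1 + d) * PowerSeries.X ^ (2 * j)) * g R a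
        = (g R a * (1 + PowerSeries.X) ^ (a + 1 + d)) * PowerSeries.X ^ (2 * j) := by ring
      _ = ((1 + PowerSeries.X) ^ d) * PowerSeries.X ^ (2 * j) := by rw [this]
  rw [hrw, PowerSeries.coeff_mul_X_pow', if_pos hj, coeff_one_add_X_pow]

theorem SL3 (a j c : ℕ) (hj : a < 2 * j) :
    ∑ i ∈ Finset.range (a + 1),
        ((2 * a - i).choose (a - i) : R)
          * (if 2 * j ≤ i then ((c.choose (i - 2 * j)) : R) else 0)
      = 0 := by
  refine Finset.sum_eq_zero fun i hi => ?_
  have : ¬ 2 * j ≤ i := by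
    have := Finset.mem_range.mp hi; omega
  rw [if_neg this, mul_zero]

section Expansion

variable (R : Type) [CommRing R] (n : ℕ)

/-- `C ∘ C` embedding of the base multivariate ring into the double polynomial ring. -/
noncomputable def CC : MvPolynomial (Fin n) R →+*
    Polynomial (Polynomial (MvPolynomial (Fin n) R)) :=
  Polynomial.C.comp Polynomial.C

theorem jq_apply (k : ℕ) (f : MvPolynomial (Fin n) R) :
    Jq R n k f = (JqT R n f).coeff k := rfl

/-- Generator values for the doubled total square with substituted values `S`, `T`. -/
noncomputable def vg (S T : Polynomial (Polynomial (MvPolynomial (Fin n) R))) (i : Fin n) :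
    Polynomial (Polynomial (MvPolynomial (Fin n) R)) :=
  CC R n (X i) + CC R n (X i) ^ 2 * S + (CC R n (X i) + CC R n (X i) ^ 2 * S) ^ 2 * T

theorem theta_eq (S T : Polynomial (Polynomial (MvPolynomial (Fin n) R)))
    (f : MvPolynomial (Fin n) R) :
    aeval (vg R n S T) f
      = Polynomial.eval₂ (Polynomial.eval₂RingHom (CC R n) S) T
          (Polynomial.map (JqT R n).toRingHom (JqT R n f)) := by
  have h : (aeval (vg R n S T) :
        MvPolynomial (Fin n) R →ₐ[R] Polynomial (Polynomial (MvPolynomial (Fin n) R))).toRingHom =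
      (Polynomial.eval₂RingHom (Polynomial.eval₂RingHom (CC R n) S) T).comp
        ((Polynomial.mapRingHom (JqT R n).toRingHom).comp (JqT R n).toRingHom) := by
    apply MvPolynomial.ringHom_ext
    · intro r
      simp [JqT, CC, MvPolynomial.algebraMap_eq, Polynomial.algebraMap_apply]
    · intro i
      simp [JqT, CC, vg, mul_pow, pow_two]
  exact DFunLike.congr_fun h f

theorem theta_expand (S T : Polynomial (Polynomial (MvPolynomial (Fin n) R)))
    (f : MvPolynomial (Fin n) R) (N : ℕ)
    (h1 : (JqT R n f).natDegree < N)
    (h2 : ∀ b', (JqT R n (Jq R n b' f)).natDegree < N) :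
    aeval (vg R n S T) f
      = ∑ b' ∈ Finset.range N, ∑ a' ∈ Finset.range N,
          CC R n (Jq R n a' (Jq R n b' f)) * S ^ a' * T ^ b' := by
  rw [theta_eq]
  have hdeg : (Polynomial.map (JqT R n).toRingHom (JqT R n f)).natDegree < N :=
    lt_of_le_of_lt Polynomial.natDegree_map_le h1
  rw [Polynomial.eval₂_eq_sum_range' _ hdeg T]
  refine Finset.sum_congr rfl fun b' _ => ?_
  have hco : (Polynomial.map (JqT R n).toRingHom (JqT R n f)).coeff b'
      = JqT R n (Jq R n b' f) := by
    rw [Polynomial.coeff_map, jq_apply]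
    rfl
  rw [hco]
  have hinner : Polynomial.eval₂RingHom (CC R n) S (JqT R n (Jq R n b' f))
      = ∑ a' ∈ Finset.range N, CC R n (Jq R n a' (Jq R n b' f)) * S ^ a' := by
    rw [Polynomial.coe_eval₂RingHom, Polynomial.eval₂_eq_sum_range' _ (h2 b') S]
    exact Finset.sum_congr rfl fun a' _ => by rw [← jq_apply]
  rw [hinner, Finset.sum_mul]

end Expansion

section Main

variable {R : Type} [CommRing R] {n : ℕ}

theorem term_coeff (w w' : Polynomial (MvPolynomial (Fin n) R)) (g : MvPolynomial (Fin n) R)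
    (a' b' i k2 : ℕ) :
    ((CC R n g * (Polynomial.C w * Polynomial.X ^ 2) ^ a'
        * (Polynomial.C w' * Polynomial.X ^ 2) ^ b').coeff k2).coeff i
      = if k2 = 2 * a' + 2 * b' then g * (w ^ a' * w' ^ b').coeff i else 0 := by
  have hterm : CC R n g * (Polynomial.C w * Polynomial.X ^ 2) ^ a'
        * (Polynomial.C w' * Polynomial.X ^ 2) ^ b'
      = Polynomial.C (Polynomial.C g * (w ^ a' * w' ^ b'))
          * Polynomial.X ^ (2 * a' + 2 * b') := by
    rw [map_mul, map_mul (Polynomial.C), map_pow, map_pow]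
    show Polynomial.C (Polynomial.C g) * _ * _ = _
    ring
  rw [hterm, Polynomial.coeff_C_mul, Polynomial.coeff_X_pow, mul_ite, mul_one, mul_zero,
    apply_ite (Polynomial.coeff · i), Polynomial.coeff_C_mul, Polynomial.coeff_zero]

set_option maxHeartbeats 4000000 in
theorem phi_expand (w w' : Polynomial (MvPolynomial (Fin n) R)) (G : ℕ → ℕ → MvPolynomial (Fin n) R)
    (N k a : ℕ) :
    ∑ i ∈ Finset.range (a + 1), ((2 * a - i).choose (a - i) : MvPolynomial (Fin n) R)
        * (((∑ b' ∈ Finset.range N, ∑ a' ∈ Finset.range N,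
              CC R n (G a' b') * (Polynomial.C w * Polynomial.X ^ 2) ^ a'
                * (Polynomial.C w' * Polynomial.X ^ 2) ^ b').coeff (2 * k)).coeff i)
      = ∑ b' ∈ Finset.range N, ∑ a' ∈ Finset.range N,
          (if 2 * k = 2 * a' + 2 * b' then
            (∑ i ∈ Finset.range (a + 1), ((2 * a - i).choose (a - i) : MvPolynomial (Fin n) R)
              * ((w ^ a' * w' ^ b').coeff i)) * G a' b'
          else 0) := by
  have hc : ∀ i, ((∑ b' ∈ Finset.range N, ∑ a' ∈ Finset.range N,
        CC R n (G a' b') * (Polynomial.C w * Polynomial.X ^ 2) ^ a'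
          * (Polynomial.C w' * Polynomial.X ^ 2) ^ b').coeff (2 * k)).coeff i
      = ∑ b' ∈ Finset.range N, ∑ a' ∈ Finset.range N,
          (if 2 * k = 2 * a' + 2 * b' then G a' b' * (w ^ a' * w' ^ b').coeff i else 0) := by
    intro i
    rw [Polynomial.finset_sum_coeff]
    rw [Polynomial.finset_sum_coeff]
    refine Finset.sum_congr rfl fun b' _ => ?_
    rw [Polynomial.finset_sum_coeff, Polynomial.finset_sum_coeff]
    exact Finset.sum_congr rfl fun a' _ => term_coeff w w' (G a' b') a' b' i (2 * k)
  calc _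
      = ∑ i ∈ Finset.range (a + 1), ∑ b' ∈ Finset.range N, ∑ a' ∈ Finset.range N,
          ((2 * a - i).choose (a - i) : MvPolynomial (Fin n) R) *
          (if 2 * k = 2 * a' + 2 * b' then G a' b' * (w ^ a' * w' ^ b').coeff i else 0) := by
        refine Finset.sum_congr rfl fun i _ => ?_
        rw [hc i, Finset.mul_sum]
        exact Finset.sum_congr rfl fun b' _ => by rw [Finset.mul_sum]
    _ = ∑ b' ∈ Finset.range N, ∑ a' ∈ Finset.range N, ∑ i ∈ Finset.range (a + 1),
          ((2 * a - i).choose (a - i) : MvPolynomial (Fin n) R) *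
          (if 2 * k = 2 * a' + 2 * b' then G a' b' * (w ^ a' * w' ^ b').coeff i else 0) := by
        rw [Finset.sum_comm]
        exact Finset.sum_congr rfl fun b' _ => Finset.sum_comm
    _ = _ := by
        refine Finset.sum_congr rfl fun b' _ => Finset.sum_congr rfl fun a' _ => ?_
        by_cases hcond : 2 * k = 2 * a' + 2 * b'
        · rw [if_pos hcond, Finset.sum_mul]
          refine Finset.sum_congr rfl fun i _ => ?_
          rw [if_pos hcond]
          ring
        · simp [hcond]

theorem collapse1 (G : ℕ → ℕ → MvPolynomial (Fin n) R) (N a b : ℕ) (haN : a < N) (hbN : b < N) :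
    ∑ b' ∈ Finset.range N, ∑ a' ∈ Finset.range N,
        (if 2 * (a + b) = 2 * a' + 2 * b' then
          (if a' = a then (1 : MvPolynomial (Fin n) R) else 0) * G a' b' else 0)
      = G a b := by
  rw [Finset.sum_eq_single_of_mem b (Finset.mem_range.mpr hbN)]
  · rw [Finset.sum_eq_single_of_mem a (Finset.mem_range.mpr haN)]
    · rw [if_pos (by omega), if_pos rfl, one_mul]
    · intro a' _ hne
      by_cases hcond : 2 * (a + b) = 2 * a' + 2 * b
      · rw [if_pos hcond, if_neg hne, zero_mul]
      · rw [if_neg hcond]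
  · intro b' _ hne
    refine Finset.sum_eq_zero fun a' _ => ?_
    by_cases hcond : 2 * (a + b) = 2 * a' + 2 * b'
    · rw [if_pos hcond, if_neg (by omega), zero_mul]
    · rw [if_neg hcond]

theorem collapse2 (G : ℕ → ℕ → MvPolynomial (Fin n) R) (V : ℕ → ℕ → MvPolynomial (Fin n) R)
    (N a k : ℕ) (hkN : k < N) (hak : a ≤ k)
    (hV0 : ∀ j, a < 2 * j → ∀ c, V c j = 0) :
    ∑ b' ∈ Finset.range N, ∑ a' ∈ Finset.range N,
        (if 2 * k = 2 * a' + 2 * b' then V a' b' * G a' b' else 0)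
      = ∑ j ∈ Finset.range (a / 2 + 1), V (k - j) j * G (k - j) j := by
  have step1 : ∀ j, j ∈ Finset.range N →
      (∑ a' ∈ Finset.range N, (if 2 * k = 2 * a' + 2 * j then V a' j * G a' j else 0))
        = if j ≤ k then V (k - j) j * G (k - j) j else 0 := by
    intro j _
    by_cases hjk : j ≤ k
    · rw [if_pos hjk, Finset.sum_eq_single_of_mem (k - j) (Finset.mem_range.mpr (by omega))]
      · rw [if_pos (by omega)]
      · intro a' _ hne
        rw [if_neg (by omega)]
    · rw [if_neg hjk]
      refine Finset.sum_eq_zero fun a' _ => ?_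
      rw [if_neg (by omega)]
  rw [Finset.sum_congr rfl step1]
  rw [← Finset.sum_subset (Finset.range_subset_range.mpr (show a / 2 + 1 ≤ N by omega))]
  · refine Finset.sum_congr rfl fun j hj => ?_
    have : j ≤ k := by
      have := Finset.mem_range.mp hj; omega
    rw [if_pos this]
  · intro j hjN hj
    have hja : a < 2 * j := by
      have h1 : ¬ j < a / 2 + 1 := fun hlt => hj (Finset.mem_range.mpr hlt)
      omega
    by_cases hjk : j ≤ k
    · rw [if_pos hjk, hV0 j hja (k - j), zero_mul]
    · rw [if_neg hjk]

theorem coeff_xx (a' i : ℕ) :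
    ((Polynomial.X ^ 2 + Polynomial.X : Polynomial (MvPolynomial (Fin n) R)) ^ a').coeff i
      = if a' ≤ i then ((a'.choose (i - a')) : MvPolynomial (Fin n) R) else 0 := by
  have h : (Polynomial.X ^ 2 + Polynomial.X : Polynomial (MvPolynomial (Fin n) R))
      = (Polynomial.X + 1) * Polynomial.X := by ring
  rw [h, mul_pow, Polynomial.coeff_mul_X_pow']
  split_ifs with hle
  · rw [Polynomial.coeff_X_add_one_pow]
  · rfl

theorem coeff_rhs_poly (c j i : ℕ) :
    (((1 + Polynomial.X : Polynomial (MvPolynomial (Fin n) R)) ^ c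
        * ((Polynomial.X : Polynomial (MvPolynomial (Fin n) R)) ^ 2) ^ j).coeff i)
      = if 2 * j ≤ i then ((c.choose (i - 2 * j)) : MvPolynomial (Fin n) R) else 0 := by
  have h : ((Polynomial.X : Polynomial (MvPolynomial (Fin n) R)) ^ 2) ^ j
      = Polynomial.X ^ (2 * j) := by rw [← pow_mul]
  rw [h, Polynomial.coeff_mul_X_pow']
  split_ifs with hle
  · rw [Polynomial.coeff_one_add_X_pow]
  · rfl

theorem phiSide_lemma (a k N : ℕ) (f : MvPolynomial (Fin n) R)
    (hN1 : (JqT R n f).natDegree < N)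
    (hN2 : ∀ b', (JqT R n (Jq R n b' f)).natDegree < N)
    (w w' : Polynomial (MvPolynomial (Fin n) R)) :
    (∑ i ∈ Finset.range (a + 1),
      ((2 * a - i).choose (a - i) : MvPolynomial (Fin n) R) *
        (((aeval (vg R n (Polynomial.C w * Polynomial.X ^ 2)
            (Polynomial.C w' * Polynomial.X ^ 2)) f).coeff (2 * k)).coeff i))
    = ∑ b' ∈ Finset.range N, ∑ a' ∈ Finset.range N,
        (if 2 * k = 2 * a' + 2 * b' then
          (∑ i ∈ Finset.range (a + 1),
            ((2 * a - i).choose (a - i) : MvPolynomial (Fin n) R)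
              * ((w ^ a' * w' ^ b').coeff i)) * Jq R n a' (Jq R n b' f)
        else 0) := by
  rw [theta_expand R n _ _ f N hN1 hN2]
  exact phi_expand w w' (fun a' b' => Jq R n a' (Jq R n b' f)) N k a

theorem lhs_eval (h2P : (2 : MvPolynomial (Fin n) R) = 0) (a b N : ℕ)
    (haN : a < N) (hbN : b < N) (f : MvPolynomial (Fin n) R) :
    ∑ b' ∈ Finset.range N, ∑ a' ∈ Finset.range N,
      (if 2 * (a + b) = 2 * a' + 2 * b' then
        (∑ i ∈ Finset.range (a + 1),
          ((2 * a - i).choose (a - i) : MvPolynomial (Fin n) R)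
            * ((((Polynomial.X : Polynomial (MvPolynomial (Fin n) R)) ^ 2 + Polynomial.X) ^ a'
                * (1 : Polynomial (MvPolynomial (Fin n) R)) ^ b').coeff i))
          * Jq R n a' (Jq R n b' f)
      else 0) = Jq R n a (Jq R n b f) := by
  have hstep : ∀ a' b' : ℕ,
      (∑ i ∈ Finset.range (a + 1),
        ((2 * a - i).choose (a - i) : MvPolynomial (Fin n) R)
          * ((((Polynomial.X : Polynomial (MvPolynomial (Fin n) R)) ^ 2 + Polynomial.X) ^ a'
              * (1 : Polynomial (MvPolynomial (Fin n) R)) ^ b').coeff i))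
      = if a' = a then 1 else 0 := by
    intro a' b'
    have hco : ∀ i, ((((Polynomial.X : Polynomial (MvPolynomial (Fin n) R)) ^ 2 + Polynomial.X) ^ a'
        * (1 : Polynomial (MvPolynomial (Fin n) R)) ^ b').coeff i)
        = if a' ≤ i then ((a'.choose (i - a')) : MvPolynomial (Fin n) R) else 0 := by
      intro i
      rw [one_pow, mul_one, coeff_xx]
    rw [Finset.sum_congr rfl fun i _ => by rw [hco i]]
    exact SL1 h2P a a'
  rw [Finset.sum_congr rfl fun b' _ => Finset.sum_congr rfl fun a' _ => by rw [hstep a' b']]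
  have hcol := collapse1 (fun a' b' => Jq R n a' (Jq R n b' f)) N a b haN hbN
  exact hcol

set_option maxHeartbeats 4000000 in
theorem rhs_eval (h2P : (2 : MvPolynomial (Fin n) R) = 0) (a b N : ℕ)
    (ha : 0 < a) (hab : a < 2 * b) (hkN : a + b < N) (f : MvPolynomial (Fin n) R) :
    ∑ b' ∈ Finset.range N, ∑ a' ∈ Finset.range N,
      (if 2 * (a + b) = 2 * a' + 2 * b' then
        (∑ i ∈ Finset.range (a + 1),
          ((2 * a - i).choose (a - i) : MvPolynomial (Fin n) R)
            * (((1 + (Polynomial.X : Polynomial (MvPolynomial (Fin n) R))) ^ a'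
                * (((Polynomial.X : Polynomial (MvPolynomial (Fin n) R)) ^ 2)) ^ b').coeff i))
          * Jq R n a' (Jq R n b' f)
      else 0)
      = ∑ j ∈ Finset.range (a / 2 + 1),
          (((b - j - 1).choose (a - 2 * j) : MvPolynomial (Fin n) R))
            * Jq R n (a + b - j) (Jq R n j f) := by
  have hV0 : ∀ j, a < 2 * j → ∀ c,
      (∑ i ∈ Finset.range (a + 1),
        ((2 * a - i).choose (a - i) : MvPolynomial (Fin n) R)
          * (((1 + (Polynomial.X : Polynomial (MvPolynomial (Fin n) R))) ^ c
              * (((Polynomial.X : Polynomial (MvPolynomial (Fin n) R)) ^ 2)) ^ j).coeff i)) = 0 := by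
    intro j hj c
    rw [Finset.sum_congr rfl fun i _ => by rw [coeff_rhs_poly c j i]]
    exact SL3 a j c hj
  have hcol := collapse2 (fun a' b' => Jq R n a' (Jq R n b' f))
      _
      N a (a + b) hkN (by omega) hV0
  refine hcol.trans ?_
  refine Finset.sum_congr rfl fun j hj => ?_
  have hj2 : 2 * j ≤ a := by
    have := Finset.mem_range.mp hj; omega
  have hd : a + b - j = a + 1 + (b - j - 1) := by omega
  have hval : (∑ i ∈ Finset.range (a + 1),
      ((2 * a - i).choose (a - i) : MvPolynomial (Fin n) R)
        * (((1 + (Polynomial.X : Polynomial (MvPolynomial (Fin n) R))) ^ (a + b - j)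
            * (((Polynomial.X : Polynomial (MvPolynomial (Fin n) R)) ^ 2)) ^ j).coeff i))
      = ((b - j - 1).choose (a - 2 * j) : MvPolynomial (Fin n) R) := by
    rw [Finset.sum_congr rfl fun i _ => by rw [coeff_rhs_poly (a + b - j) j i, hd]]
    exact SL2 h2P a j (b - j - 1) hj2
  rw [hval]

theorem bm_identity (h2A : (2 : Polynomial (Polynomial (MvPolynomial (Fin n) R))) = 0) :
    vg R n (Polynomial.C ((Polynomial.X : Polynomial (MvPolynomial (Fin n) R)) ^ 2 + Polynomial.X)
        * Polynomial.X ^ 2)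
      (Polynomial.C (1 : Polynomial (MvPolynomial (Fin n) R)) * Polynomial.X ^ 2)
    = vg R n (Polynomial.C (1 + (Polynomial.X : Polynomial (MvPolynomial (Fin n) R)))
        * Polynomial.X ^ 2)
      (Polynomial.C ((Polynomial.X : Polynomial (MvPolynomial (Fin n) R)) ^ 2)
        * Polynomial.X ^ 2) := by
  funext i
  simp only [vg, map_add, map_pow, map_one]
  rw [← sub_eq_zero]
  have hr : ∀ x t q : Polynomial (Polynomial (MvPolynomial (Fin n) R)),
      (x + x ^ 2 * ((q ^ 2 + q) * t ^ 2)
          + (x + x ^ 2 * ((q ^ 2 + q) * t ^ 2)) ^ 2 * (1 * t ^ 2))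
        - (x + x ^ 2 * ((1 + q) * t ^ 2)
          + (x + x ^ 2 * ((1 + q) * t ^ 2)) ^ 2 * (q ^ 2 * t ^ 2))
        = (x ^ 3 * t ^ 4 * (q - q ^ 3)) * 2 := by
    intro x t q
    ring
  rw [hr (CC R n (X i)) Polynomial.X
    (Polynomial.C (Polynomial.X : Polynomial (MvPolynomial (Fin n) R))), h2A, mul_zero]

theorem adem_general (h2 : (2 : R) = 0) (a b : ℕ) (ha : 0 < a) (hab : a < 2 * b)
    (f : MvPolynomial (Fin n) R) :
    Jq R n a (Jq R n b f)
      = ∑ j ∈ Finset.range (a / 2 + 1),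
          (((b - j - 1).choose (a - 2 * j) : R)) • Jq R n (a + b - j) (Jq R n j f) := by
  have h2P : (2 : MvPolynomial (Fin n) R) = 0 := by
    have h := map_ofNat (MvPolynomial.C : R →+* MvPolynomial (Fin n) R) 2
    rw [← h, show ((OfNat.ofNat 2 : R)) = (2 : R) from rfl, h2, map_zero]
  have h2PP : (2 : Polynomial (MvPolynomial (Fin n) R)) = 0 := by
    have h := map_ofNat (Polynomial.C :
      MvPolynomial (Fin n) R →+* Polynomial (MvPolynomial (Fin n) R)) 2
    rw [← h, show ((OfNat.ofNat 2 : MvPolynomial (Fin n) R)) = (2 : _) from rfl, h2P, map_zero]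
  have h2A : (2 : Polynomial (Polynomial (MvPolynomial (Fin n) R))) = 0 := by
    have h := map_ofNat (Polynomial.C : Polynomial (MvPolynomial (Fin n) R)
      →+* Polynomial (Polynomial (MvPolynomial (Fin n) R))) 2
    rw [← h, show ((OfNat.ofNat 2 : Polynomial (MvPolynomial (Fin n) R))) = (2 : _) from rfl,
      h2PP, map_zero]
  set M := (Finset.range ((JqT R n f).natDegree + 1)).sup
    (fun b' => (JqT R n (Jq R n b' f)).natDegree) with hM
  set N := M + (JqT R n f).natDegree + (a + b) + 2 with hNdef
  have hN1 : (JqT R n f).natDegree < N := by omega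
  have hN2 : ∀ b', (JqT R n (Jq R n b' f)).natDegree < N := by
    intro b'
    by_cases hb : b' ≤ (JqT R n f).natDegree
    · have hle : (JqT R n (Jq R n b' f)).natDegree ≤ M :=
        hM ▸ Finset.le_sup (f := fun b' => (JqT R n (Jq R n b' f)).natDegree)
          (Finset.mem_range.mpr (by omega))
      omega
    · have hz : Jq R n b' f = 0 := by
        rw [jq_apply]
        exact Polynomial.coeff_eq_zero_of_natDegree_lt (by omega)
      rw [hz, map_zero]
      simp only [Polynomial.natDegree_zero]
      omega
  have haN : a < N := by omega
  have hbN : b < N := by omega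
  have hkN : a + b < N := by omega
  have E1 := phiSide_lemma a (a + b) N f hN1 hN2
    ((Polynomial.X : Polynomial (MvPolynomial (Fin n) R)) ^ 2 + Polynomial.X) 1
  have E2 := phiSide_lemma a (a + b) N f hN1 hN2
    (1 + (Polynomial.X : Polynomial (MvPolynomial (Fin n) R)))
    ((Polynomial.X : Polynomial (MvPolynomial (Fin n) R)) ^ 2)
  have hvf := congrArg
    (fun S : (Fin n → Polynomial (Polynomial (MvPolynomial (Fin n) R))) =>
      ∑ i ∈ Finset.range (a + 1),
        ((2 * a - i).choose (a - i) : MvPolynomial (Fin n) R) *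
          ((((aeval S) f).coeff (2 * (a + b))).coeff i))
    (bm_identity (R := R) (n := n) h2A)
  have EPhi := (E1.symm.trans hvf).trans E2
  rw [← lhs_eval h2P a b N haN hbN f, EPhi, rhs_eval h2P a b N ha hab hkN f]
  refine Finset.sum_congr rfl fun j _ => ?_
  rw [MvPolynomial.smul_eq_C_mul, map_natCast]

end Main

section MapCompat

variable (R S : Type) [CommRing R] [CommRing S] (ψ : R →+* S) (n : ℕ)

theorem jqT_map (f : MvPolynomial (Fin n) R) :
    JqT S n (MvPolynomial.map ψ f)
      = Polynomial.map (MvPolynomial.map ψ) (JqT R n f) := by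
  have h : ((JqT S n).toRingHom.comp (MvPolynomial.map ψ) :
        MvPolynomial (Fin n) R →+* Polynomial (MvPolynomial (Fin n) S))
      = (Polynomial.mapRingHom (MvPolynomial.map ψ)).comp (JqT R n).toRingHom := by
    apply MvPolynomial.ringHom_ext
    · intro r
      simp [JqT, MvPolynomial.algebraMap_eq, Polynomial.algebraMap_apply]
    · intro i
      simp [JqT]
  exact DFunLike.congr_fun h f

theorem jq_map (k : ℕ) (f : MvPolynomial (Fin n) R) :
    Jq S n k (MvPolynomial.map ψ f) = MvPolynomial.map ψ (Jq R n k f) := by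
  rw [jq_apply, jqT_map, Polynomial.coeff_map, jq_apply]

end MapCompat

end AdemAux

/-- Adem relation elements map into `2·ℤ₂[ξ₁,…,ξₙ]`: for `0 < a < 2b`, every
coefficient of `R(a,b)(f) = Jq^aJq^b(f) − Σ_{j=0}^{⌊a/2⌋} C(b−j−1, a−2j) Jq^{a+b−j}Jq^j(f)`
is divisible by `2` in `ℤ₂`. -/
theorem adem_relation_coeffs_even (n : ℕ) (hn : 1 ≤ n) (a b : ℕ)
    (ha : 0 < a) (hab : a < 2 * b) (f : MvPolynomial (Fin n) ℤ_[2]) (m : Fin n →₀ ℕ) :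
    (2 : ℤ_[2]) ∣ coeff m
      (Jq ℤ_[2] n a (Jq ℤ_[2] n b f) -
        ∑ j ∈ Finset.range (a / 2 + 1),
          ((b - j - 1).choose (a - 2 * j) : ℤ_[2]) •
            Jq ℤ_[2] n (a + b - j) (Jq ℤ_[2] n j f)) := by
  set φ := (PadicInt.toZMod : ℤ_[2] →+* ZMod 2) with hφ
  set E := Jq ℤ_[2] n a (Jq ℤ_[2] n b f) -
      ∑ j ∈ Finset.range (a / 2 + 1),
        ((b - j - 1).choose (a - 2 * j) : ℤ_[2]) •
          Jq ℤ_[2] n (a + b - j) (Jq ℤ_[2] n j f) with hE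
  have hmap : MvPolynomial.map φ E = 0 := by
    rw [hE, map_sub]
    have hterm : ∀ j, MvPolynomial.map φ
        (((b - j - 1).choose (a - 2 * j) : ℤ_[2]) •
          Jq ℤ_[2] n (a + b - j) (Jq ℤ_[2] n j f))
        = ((b - j - 1).choose (a - 2 * j) : ZMod 2) •
            Jq (ZMod 2) n (a + b - j) (Jq (ZMod 2) n j (MvPolynomial.map φ f)) := by
      intro j
      rw [MvPolynomial.smul_eq_C_mul, map_mul, MvPolynomial.map_C, map_natCast,
        AdemAux.jq_map ℤ_[2] (ZMod 2) φ n, AdemAux.jq_map ℤ_[2] (ZMod 2) φ n,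
        ← MvPolynomial.smul_eq_C_mul]
    rw [map_sum, Finset.sum_congr rfl fun j _ => hterm j,
      ← AdemAux.jq_map ℤ_[2] (ZMod 2) φ n a (Jq ℤ_[2] n b f),
      ← AdemAux.jq_map ℤ_[2] (ZMod 2) φ n b f, sub_eq_zero]
    exact AdemAux.adem_general (by decide) a b ha hab (MvPolynomial.map φ f)
  have hc : φ (coeff m E) = 0 := by
    have := congrArg (coeff m) hmap
    rwa [MvPolynomial.coeff_map, MvPolynomial.coeff_zero] at this
  have hker : coeff m E ∈ RingHom.ker φ := hc
  rw [hφ, PadicInt.ker_toZMod, PadicInt.maximalIdeal_eq_span_p,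
    Ideal.mem_span_singleton] at hker
  exact_mod_cast hker
end
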